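/- Suppose T : ℝ^d × ℝ^d → [0,∞) satisfies T(a,b) ≤ ‖a − b‖ and the triangle inequality, and suppose that for a constant μ ≥ 0 and for every x in a finite ε-net A of the unit sphere S(1) we have: for all n ≥ N, |T(0,nx)/n − μ| ≤ ε. Then for every y ∈ ℝ^d with n(y) := ⌊‖y‖⌋ ≥ max(N, 1/ε), one has |T(0,y) − n(y)·μ| ≤ 3ε·n(y). -/
import Mathlib


open Metric

/-- The deterministic core of uniform convergence in Theorem 1: if `T` is subadditive,
nonnegative, bounded by the distance, and `T(0, n x)/n` is `ε`-close to `μ` for all `n ≥ N`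
and all `x` in a finite `ε`-net `A` of the unit sphere, then for any `y` with
`n(y) = ⌊‖y‖⌋ ≥ max(N, 1/ε)` one has `|T(0,y) − n(y) μ| ≤ 3 ε n(y)`. -/
theorem uniform_convergence_core {d : ℕ}
    (T : EuclideanSpace ℝ (Fin d) → EuclideanSpace ℝ (Fin d) → ℝ)
    (hnn : ∀ a b, 0 ≤ T a b)
    (hub : ∀ a b, T a b ≤ ‖a - b‖)
    (htri : ∀ a b c, T a c ≤ T a b + T b c)
    (μ ε : ℝ) (hμ : 0 ≤ μ) (hε : 0 < ε)
    (A : Finset (EuclideanSpace ℝ (Fin d)))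
    (hA : (A : Set (EuclideanSpace ℝ (Fin d))) ⊆ sphere (0 : EuclideanSpace ℝ (Fin d)) 1)
    (hnet : ∀ z ∈ sphere (0 : EuclideanSpace ℝ (Fin d)) 1, ∃ x ∈ A, ‖z - x‖ ≤ ε)
    (N : ℕ)
    (hconv : ∀ x ∈ A, ∀ n : ℕ, N ≤ n → |T 0 ((n : ℝ) • x) / n - μ| ≤ ε)
    (y : EuclideanSpace ℝ (Fin d)) (hy : y ≠ 0)
    (hN : N ≤ ⌊‖y‖⌋₊) (hNε : 1 ≤ (⌊‖y‖⌋₊ : ℝ) * ε) :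
    |T 0 y - (⌊‖y‖⌋₊ : ℝ) * μ| ≤ 3 * ε * (⌊‖y‖⌋₊ : ℝ) := by

  set n : ℕ := ⌊‖y‖⌋₊ with hn
  have hy0 : 0 < ‖y‖ := norm_pos_iff.mpr hy
  have hnpos : 0 < (n : ℝ) := by
    by_contra h
    push_neg at h
    have : (n:ℝ) * ε ≤ 0 := mul_nonpos_of_nonpos_of_nonneg h hε.le
    linarith
  -- the normalized vector
  set z : EuclideanSpace ℝ (Fin d) := ‖y‖⁻¹ • y with hz
  have hzs : z ∈ sphere (0 : EuclideanSpace ℝ (Fin d)) 1 := by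
    simp [hz, norm_smul, abs_of_pos (inv_pos.mpr hy0), inv_mul_cancel₀ hy0.ne']
  obtain ⟨x, hxA, hxz⟩ := hnet z hzs
  -- |T 0 (n•x) - n μ| ≤ n ε
  have hc := hconv x hxA n hN
  have h1 : |T 0 ((n : ℝ) • x) - (n:ℝ) * μ| ≤ (n:ℝ) * ε := by
    obtain ⟨c1, c2⟩ := abs_sub_le_iff.mp hc
    have heq : T 0 ((n:ℝ) • x) = (T 0 ((n:ℝ) • x) / n) * n := by field_simp
    have m1 := mul_le_mul_of_nonneg_right c1 hnpos.le
    have m2 := mul_le_mul_of_nonneg_right c2 hnpos.le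
    rw [abs_sub_le_iff]
    constructor <;> nlinarith
  -- ‖y - n • x‖ ≤ 1 + n ε
  have hnle : (n:ℝ) ≤ ‖y‖ := Nat.floor_le hy0.le
  have hlt : ‖y‖ < (n:ℝ) + 1 := Nat.lt_floor_add_one _
  have hyz : y = ‖y‖ • z := by
    rw [hz, smul_smul, mul_inv_cancel₀ hy0.ne', one_smul]
  have hdist : ‖y - (n:ℝ) • x‖ ≤ 1 + (n:ℝ) * ε := by
    have : y - (n:ℝ) • x = (‖y‖ - (n:ℝ)) • z + (n:ℝ) • (z - x) := by
      rw [smul_sub, sub_smul]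
      rw [← hyz]; abel
    rw [this]
    calc ‖(‖y‖ - (n:ℝ)) • z + (n:ℝ) • (z - x)‖
        ≤ ‖(‖y‖ - (n:ℝ)) • z‖ + ‖(n:ℝ) • (z - x)‖ := norm_add_le _ _
      _ ≤ 1 + (n:ℝ) * ε := by
          have hz1 : ‖z‖ = 1 := by simpa using hzs
          have e1 : ‖(‖y‖ - (n:ℝ)) • z‖ ≤ 1 := by
            rw [norm_smul, hz1, mul_one, Real.norm_eq_abs, abs_le]
            constructor <;> linarith
          have e2 : ‖(n:ℝ) • (z - x)‖ ≤ (n:ℝ) * ε := by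
            rw [norm_smul, Real.norm_natCast]
            exact mul_le_mul_of_nonneg_left hxz hnpos.le
          linarith
  -- |T 0 y - T 0 (n•x)| ≤ ‖y - n•x‖
  have hT1 : T 0 y ≤ T 0 ((n:ℝ) • x) + ‖y - (n:ℝ) • x‖ := by
    have := htri 0 ((n:ℝ) • x) y
    have h2 := hub ((n:ℝ) • x) y
    have : T 0 y ≤ T 0 ((n:ℝ) • x) + ‖(n:ℝ) • x - y‖ := by linarith
    rwa [norm_sub_rev] at this
  have hT2 : T 0 ((n:ℝ) • x) ≤ T 0 y + ‖y - (n:ℝ) • x‖ := by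
    have := htri 0 y ((n:ℝ) • x)
    have h2 := hub y ((n:ℝ) • x)
    linarith
  have key : |T 0 y - T 0 ((n:ℝ) • x)| ≤ 1 + (n:ℝ) * ε := by
    rw [abs_sub_le_iff]; constructor <;> linarith
  calc |T 0 y - (n:ℝ) * μ|
      ≤ |T 0 y - T 0 ((n:ℝ) • x)| + |T 0 ((n:ℝ) • x) - (n:ℝ) * μ| := abs_sub_le _ _ _
    _ ≤ (1 + (n:ℝ) * ε) + (n:ℝ) * ε := add_le_add key h1
    _ ≤ 3 * ε * (n:ℝ) := by nlinarith
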